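/- Let {A_v}_{v∈V} be a non-empty finite collection of events in a probability space, where the index set V is the vertex set of a chordal graph G. Then for every positive integer r, Σ_{I∈𝒞(G)} (−1)^{|I|−1} · Pr(⋂_{i∈I} A_i) ≥ Σ_{I∈𝒞(G), |I|≤2r} (−1)^{|I|−1} · Pr(⋂_{i∈I} A_i), i.e., the full alternating sum over the clique complex is at least any of its even-order truncations. -/

import Mathlib

open MeasureTheory Finset
open scoped Classical

/-- A graph is chordal if it contains no induced cycle of length four or greater. -/
def SimpleGraph.IsChordal {V : Type*} (G : SimpleGraph V) : Prop :=
  ∀ n : ℕ, 4 ≤ n → ∀ s : Set V, ¬ Nonempty (G.induce s ≃g SimpleGraph.cycleGraph n)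

/-- The clique complex of `G`: the collection of all non-empty cliques of `G`. -/
noncomputable def SimpleGraph.cliqueComplex {V : Type*} [Fintype V] (G : SimpleGraph V) :
    Finset (Finset V) :=
  Finset.univ.powerset.filter fun I => I.Nonempty ∧ G.IsClique (I : Set V)

/-- The independence number of `G`: the maximum size of a set of pairwise
non-adjacent vertices. -/
noncomputable def SimpleGraph.indepNum' {V : Type*} [Fintype V] (G : SimpleGraph V) : ℕ :=
  sSup {n | ∃ s : Finset V, ((s : Set V).Pairwise fun v w => ¬ G.Adj v w) ∧ s.card = n}

namespace ChordalAux

variable {V : Type*} (G : SimpleGraph V)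

/-- Reachability within a finset `s`. -/
def WIn (s : Finset V) (a b : V) : Prop :=
  ∃ w : G.Walk a b, ∀ x ∈ w.support, x ∈ s

variable {G}

lemma WIn.refl {s : Finset V} {a : V} (ha : a ∈ s) : WIn G s a a :=
  ⟨SimpleGraph.Walk.nil, by simp [ha]⟩

lemma WIn.symm {s : Finset V} {a b : V} (h : WIn G s a b) : WIn G s b a := by
  obtain ⟨w, hw⟩ := h
  exact ⟨w.reverse, by simpa using hw⟩

lemma WIn.trans {s : Finset V} {a b c : V} (h1 : WIn G s a b) (h2 : WIn G s b c) :
    WIn G s a c := by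
  obtain ⟨w1, hw1⟩ := h1
  obtain ⟨w2, hw2⟩ := h2
  refine ⟨w1.append w2, fun x hx => ?_⟩
  rw [SimpleGraph.Walk.mem_support_append_iff] at hx
  exact hx.elim (hw1 x) (hw2 x)

lemma WIn.left_mem {s : Finset V} {a b : V} (h : WIn G s a b) : a ∈ s := by
  obtain ⟨w, hw⟩ := h; exact hw a w.start_mem_support

lemma WIn.right_mem {s : Finset V} {a b : V} (h : WIn G s a b) : b ∈ s := by
  obtain ⟨w, hw⟩ := h; exact hw b w.end_mem_support

lemma WIn.mono {s t : Finset V} (hst : s ⊆ t) {a b : V} (h : WIn G s a b) : WIn G t a b := by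
  obtain ⟨w, hw⟩ := h; exact ⟨w, fun x hx => hst (hw x hx)⟩

lemma WIn.of_adj {s : Finset V} {a b : V} (ha : a ∈ s) (hb : b ∈ s) (h : G.Adj a b) :
    WIn G s a b :=
  ⟨SimpleGraph.Walk.cons h SimpleGraph.Walk.nil, by simp [ha, hb]⟩

/-- take: there is a walk of length `i` from `a` to `p.getVert i` inside the support. -/
lemma exists_take {a b : V} (p : G.Walk a b) (i : ℕ) (hi : i ≤ p.length) :
    ∃ q : G.Walk a (p.getVert i), q.length = i ∧ ∀ x ∈ q.support, x ∈ p.support := by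
  induction p generalizing i with
  | nil =>
    simp only [SimpleGraph.Walk.length_nil, Nat.le_zero] at hi
    subst hi
    exact ⟨SimpleGraph.Walk.nil, rfl, by simp⟩
  | cons h q ih =>
    cases i with
    | zero => exact ⟨SimpleGraph.Walk.nil, rfl, by intro x hx; have hx' : x = _ := List.mem_singleton.mp hx; subst hx'; exact SimpleGraph.Walk.start_mem_support _⟩
    | succ i =>
      have hi' : i ≤ q.length := by simpa using hi
      obtain ⟨q', hq', hsup⟩ := ih i hi'
      refine ⟨(q'.cons h).copy rfl (by rw [SimpleGraph.Walk.getVert_cons_succ]), by simpa, ?_⟩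
      intro x hx
      simp only [SimpleGraph.Walk.support_copy, SimpleGraph.Walk.support_cons] at hx ⊢
      rcases List.mem_cons.mp hx with rfl | hx
      · exact List.mem_cons_self
      · exact List.mem_cons_of_mem _ (hsup x hx)

lemma exists_drop {a b : V} (p : G.Walk a b) (i : ℕ) (hi : i ≤ p.length) :
    ∃ q : G.Walk (p.getVert i) b, q.length = p.length - i ∧ ∀ x ∈ q.support, x ∈ p.support := by
  induction p generalizing i with
  | nil =>
    simp only [SimpleGraph.Walk.length_nil, Nat.le_zero] at hi
    subst hi
    exact ⟨SimpleGraph.Walk.nil.copy (by simp) rfl, by simp, by simp⟩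
  | cons h q ih =>
    cases i with
    | zero =>
      exact ⟨(q.cons h).copy ((q.cons h).getVert_zero).symm rfl, by simp, by simp⟩
    | succ i =>
      have hi' : i ≤ q.length := by simpa using hi
      obtain ⟨q', hq', hsup⟩ := ih i hi'
      refine ⟨q'.copy (by rw [SimpleGraph.Walk.getVert_cons_succ]) rfl, by simpa using hq', ?_⟩
      intro x hx
      simp only [SimpleGraph.Walk.support_copy] at hx
      simp only [SimpleGraph.Walk.support_cons]
      exact List.mem_cons_of_mem _ (hsup x hx)

/-- getVert is injective on `[0, length]` for paths. -/
lemma IsPath.getVert_inj {a b : V} {p : G.Walk a b} (hp : p.IsPath) {i j : ℕ}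
    (hi : i ≤ p.length) (hj : j ≤ p.length) (h : p.getVert i = p.getVert j) : i = j := by
  induction p generalizing i j with
  | nil => simp only [SimpleGraph.Walk.length_nil, Nat.le_zero] at hi hj; omega
  | cons hadj q ih =>
    rw [SimpleGraph.Walk.cons_isPath_iff] at hp
    cases i with
    | zero =>
      cases j with
      | zero => rfl
      | succ j =>
        exfalso
        apply hp.2
        rw [SimpleGraph.Walk.getVert_zero, SimpleGraph.Walk.getVert_cons_succ] at h
        rw [h]
        exact SimpleGraph.Walk.mem_support_iff_exists_getVert.mpr ⟨j, rfl, by simpa using hj⟩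
    | succ i =>
      cases j with
      | zero =>
        exfalso
        apply hp.2
        rw [SimpleGraph.Walk.getVert_zero, SimpleGraph.Walk.getVert_cons_succ] at h
        rw [← h]
        exact SimpleGraph.Walk.mem_support_iff_exists_getVert.mpr ⟨i, rfl, by simpa using hi⟩
      | succ j =>
        rw [SimpleGraph.Walk.getVert_cons_succ, SimpleGraph.Walk.getVert_cons_succ] at h
        have := ih hp.1 (by simpa using hi) (by simpa using hj) h
        omega

end ChordalAux

namespace ChordalAux

variable {V : Type*} {G : SimpleGraph V}

lemma fin_sub_val_one {n : ℕ} (a b : Fin (n+2)) :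
    (a - b).val = 1 ↔ (a.val = b.val + 1 ∨ (a.val = 0 ∧ b.val = n+1)) := by
  have hv : (a - b).val = (n + 2 - b.val + a.val) % (n + 2) := by
    rw [Fin.sub_def]
  have ha := a.isLt
  have hb := b.isLt
  rcases le_or_gt b.val a.val with h | h
  · have h1 : n + 2 - b.val + a.val = (a.val - b.val) + (n + 2) := by omega
    rw [h1, Nat.add_mod_right, Nat.mod_eq_of_lt (by omega)] at hv
    omega
  · rw [Nat.mod_eq_of_lt (by omega)] at hv
    omega

lemma cyc_adj_iff {n : ℕ} (i j : Fin (n+2)) :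
    (SimpleGraph.cycleGraph (n+2)).Adj i j ↔
      (j.val = i.val + 1 ∨ i.val = j.val + 1 ∨ (i.val = 0 ∧ j.val = n+1) ∨
        (j.val = 0 ∧ i.val = n+1)) := by
  rw [SimpleGraph.cycleGraph_adj]
  have h1 : (i - j = 1) ↔ (i - j).val = 1 := by
    constructor
    · intro h; rw [h]; simp [Fin.val_one]
    · intro h; exact Fin.ext (by simpa [Fin.val_one] using h)
  have h2 : (j - i = 1) ↔ (j - i).val = 1 := by
    constructor
    · intro h; rw [h]; simp [Fin.val_one]
    · intro h; exact Fin.ext (by simpa [Fin.val_one] using h)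
  rw [h1, h2, fin_sub_val_one, fin_sub_val_one]
  omega

/-- Key chordality lemma: if `v ∉ s` and `a`, `b` are neighbors of `v` joined by a walk
inside `s`, then they are joined by a walk inside the neighbors of `v` in `s`. -/
lemma key (hG : G.IsChordal) {s : Finset V} {v : V} (hv : v ∉ s) :
    ∀ n : ℕ, ∀ a b : V, G.Adj v a → G.Adj v b →
      (∃ w : G.Walk a b, (∀ x ∈ w.support, x ∈ s) ∧ w.length = n) →
      WIn G (s.filter (G.Adj v)) a b := by
  intro n
  induction n using Nat.strong_induction_on with
  | _ n IH =>
  intro a b hva hvb ⟨w, hws, hlen⟩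
  by_cases hshort : ∃ m, m < n ∧ ∃ w' : G.Walk a b, (∀ x ∈ w'.support, x ∈ s) ∧ w'.length = m
  · obtain ⟨m, hm, hw'⟩ := hshort
    exact IH m hm a b hva hvb hw'
  push_neg at hshort
  have ha : a ∈ s := hws a w.start_mem_support
  have hb : b ∈ s := hws b w.end_mem_support
  -- replace by a path
  set p := w.bypass with hp_def
  have hp : p.IsPath := w.bypass_isPath
  have hps : ∀ x ∈ p.support, x ∈ s := fun x hx => hws x (w.support_bypass_subset hx)
  have hpl : p.length = n := by
    have hle : p.length ≤ n := hlen ▸ w.length_bypass_le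
    rcases lt_or_eq_of_le hle with hlt | heq
    · exact absurd rfl (hshort p.length hlt p hps)
    · exact heq
  -- small cases
  match n, hpl with
  | 0, hpl =>
    have : a = b := SimpleGraph.Walk.eq_of_length_eq_zero hpl
    subst this
    exact WIn.refl (mem_filter.mpr ⟨ha, hva⟩)
  | 1, hpl =>
    have hadj : G.Adj a b := by
      have h1 := p.adj_getVert_succ (i := 0) (by omega)
      have h2 : p.getVert 1 = b := by
        have := p.getVert_length
        rwa [hpl] at this
      rwa [p.getVert_zero, h2] at h1
    exact WIn.of_adj (mem_filter.mpr ⟨ha, hva⟩) (mem_filter.mpr ⟨hb, hvb⟩) hadj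
  | (m+2), hpl =>
  set n := m + 2 with hn
  clear hp_def hlen
  clear_value p n
  by_cases hmid : ∃ k, 0 < k ∧ k < n ∧ G.Adj v (p.getVert k)
  · obtain ⟨k, hk0, hkn, hvk⟩ := hmid
    obtain ⟨q1, hq1l, hq1s⟩ := exists_take p k (by omega)
    obtain ⟨q2, hq2l, hq2s⟩ := exists_drop p k (by omega)
    have h1 : WIn G (s.filter (G.Adj v)) a (p.getVert k) :=
      IH k (by omega) a _ hva hvk ⟨q1, fun x hx => hps x (hq1s x hx), hq1l⟩
    have h2 : WIn G (s.filter (G.Adj v)) (p.getVert k) b :=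
      IH (n - k) (by omega) _ b hvk hvb ⟨q2, fun x hx => hps x (hq2s x hx), by omega⟩
    exact h1.trans h2
  · exfalso
    push_neg at hmid
    -- no chords
    have hnochord : ∀ i j : ℕ, i + 2 ≤ j → j ≤ n → ¬ G.Adj (p.getVert i) (p.getVert j) := by
      intro i j hij hjn hadj
      obtain ⟨q1, hq1l, hq1s⟩ := exists_take p i (by omega)
      obtain ⟨q2, hq2l, hq2s⟩ := exists_drop p j (by omega)
      refine hshort (q1.append (SimpleGraph.Walk.cons hadj q2)).length ?_
        (q1.append (SimpleGraph.Walk.cons hadj q2)) ?_ rfl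
      · simp only [SimpleGraph.Walk.length_append, SimpleGraph.Walk.length_cons]
        omega
      · intro x hx
        rw [SimpleGraph.Walk.mem_support_append_iff] at hx
        rcases hx with hx | hx
        · exact hps x (hq1s x hx)
        · rw [SimpleGraph.Walk.support_cons] at hx
          rcases List.mem_cons.mp hx with rfl | hx
          · exact hps _ (SimpleGraph.Walk.mem_support_iff_exists_getVert.mpr ⟨i, rfl, by omega⟩)
          · exact hps x (hq2s x hx)
    have hvadj : ∀ k : ℕ, k ≤ n → (G.Adj v (p.getVert k) ↔ (k = 0 ∨ k = n)) := by
      intro k hkn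
      constructor
      · intro h
        by_contra hc
        push_neg at hc
        exact hmid k (by omega) (by omega) h
      · rintro (rfl | rfl)
        · rwa [p.getVert_zero]
        · rw [← hpl, p.getVert_length]; exact hvb
    have hvnot : v ∉ p.support := fun h => hv (hps v h)
    -- the induced cycle
    set S : Set V := insert v {x | x ∈ p.support} with hS_def
    have hfmem : ∀ k : ℕ, k ≤ n → p.getVert k ∈ S := fun k hk =>
      Set.mem_insert_iff.mpr (Or.inr
        (SimpleGraph.Walk.mem_support_iff_exists_getVert.mpr ⟨k, rfl, by omega⟩))
    set f : Fin (n+2) → S := fun i =>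
      if h : i.val = 0 then ⟨v, Set.mem_insert _ _⟩
      else ⟨p.getVert (i.val - 1), hfmem _ (by have := i.isLt; omega)⟩ with hf_def
    have hf_inj : Function.Injective f := by
      intro i j hij
      by_cases hi : i.val = 0 <;> by_cases hj : j.val = 0
      · exact Fin.ext (by omega)
      · exfalso
        simp only [hf_def, hi, hj, dif_pos, dif_neg, not_false_iff] at hij
        have : v ∈ p.support := by
          rw [show v = p.getVert (j.val - 1) from congrArg Subtype.val hij]
          exact SimpleGraph.Walk.mem_support_iff_exists_getVert.mpr
            ⟨j.val - 1, rfl, by have := j.isLt; omega⟩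
        exact hvnot this
      · exfalso
        simp only [hf_def, hi, hj, dif_pos, dif_neg, not_false_iff] at hij
        have : v ∈ p.support := by
          rw [show v = p.getVert (i.val - 1) from (congrArg Subtype.val hij).symm]
          exact SimpleGraph.Walk.mem_support_iff_exists_getVert.mpr
            ⟨i.val - 1, rfl, by have := i.isLt; omega⟩
        exact hvnot this
      · simp only [hf_def, hi, hj, dif_neg, not_false_iff] at hij
        have := IsPath.getVert_inj hp (i := i.val - 1) (j := j.val - 1)
          (by have := i.isLt; omega) (by have := j.isLt; omega)
          (congrArg Subtype.val hij)
        have hi' := i.isLt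
        have hj' := j.isLt
        exact Fin.ext (by omega)
    have hf_surj : Function.Surjective f := by
      rintro ⟨x, hx⟩
      rcases Set.mem_insert_iff.mp hx with rfl | hx'
      · exact ⟨⟨0, by omega⟩, by simp [hf_def]⟩
      · obtain ⟨k, hk, hkl⟩ := SimpleGraph.Walk.mem_support_iff_exists_getVert.mp hx'
        refine ⟨⟨k + 1, by omega⟩, ?_⟩
        simp only [hf_def]
        rw [dif_neg (by simp)]
        exact Subtype.ext (by simpa using hk)
    -- adjacency characterization
    have hadj_iff : ∀ i j : Fin (n+2),
        G.Adj (f i).val (f j).val ↔ (SimpleGraph.cycleGraph (n+2)).Adj i j := by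
      intro i j
      rw [cyc_adj_iff]
      have hi' := i.isLt
      have hj' := j.isLt
      by_cases hi : i.val = 0 <;> by_cases hj : j.val = 0
      · simp only [hf_def, hi, hj, dif_pos]
        constructor
        · intro h; exact absurd h (G.irrefl)
        · intro h; exfalso; omega
      · simp only [hf_def, hi, hj, dif_pos, dif_neg, not_false_iff]
        rw [hvadj (j.val - 1) (by omega)]
        simp only [true_and, false_and, and_true, and_false, or_false, false_or]
        omega
      · simp only [hf_def, hi, hj, dif_pos, dif_neg, not_false_iff]
        rw [G.adj_comm, hvadj (i.val - 1) (by omega)]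
        simp only [true_and, false_and, and_true, and_false, or_false, false_or]
        omega
      · simp only [hf_def, hi, hj, dif_neg, not_false_iff]
        constructor
        · intro h
          -- adjacency between two path vertices implies consecutive
          by_contra hc
          push_neg at hc
          have hne : i.val - 1 ≠ j.val - 1 := by
            intro he
            have : i = j := Fin.ext (by omega)
            subst this
            exact G.irrefl h
          rcases Nat.lt_or_ge (i.val - 1) (j.val - 1) with hlt | hge
          · have : i.val - 1 + 2 ≤ j.val - 1 := by omega
            exact hnochord _ _ this (by omega) h
          · have hlt : j.val - 1 < i.val - 1 := by omega
            have : j.val - 1 + 2 ≤ i.val - 1 := by omega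
            exact hnochord _ _ this (by omega) (G.adj_comm _ _ |>.mp h)
        · intro hc
          rcases hc with h | h | h | h
          · have : j.val - 1 = (i.val - 1) + 1 := by omega
            rw [this]
            exact p.adj_getVert_succ (by omega)
          · have : i.val - 1 = (j.val - 1) + 1 := by omega
            rw [this]
            exact (p.adj_getVert_succ (by omega)).symm
          · first | exact h.1.elim | exact absurd h.1 hi
          · first | exact h.1.elim | exact absurd h.1 hj
    have hiso : SimpleGraph.cycleGraph (n+2) ≃g G.induce S := by
      refine ⟨Equiv.ofBijective f ⟨hf_inj, hf_surj⟩, ?_⟩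
      intro i j
      simp only [Equiv.ofBijective_apply, SimpleGraph.comap_adj, Function.Embedding.coe_subtype]
      exact hadj_iff i j
    exact hG (n+2) (by omega) S ⟨hiso.symm⟩

/-- The `WIn`-class of `a` inside `s`. -/
noncomputable def cls (G : SimpleGraph V) (s : Finset V) (a : V) : Finset V :=
  s.filter (WIn G s a)

lemma mem_cls_iff {s : Finset V} {a b : V} : b ∈ cls G s a ↔ b ∈ s ∧ WIn G s a b :=
  mem_filter

lemma mem_cls_self {s : Finset V} {a : V} (ha : a ∈ s) : a ∈ cls G s a :=
  mem_filter.mpr ⟨ha, WIn.refl ha⟩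

lemma cls_eq_of_win {s : Finset V} {a b : V} (h : WIn G s a b) : cls G s a = cls G s b := by
  ext x
  simp only [mem_cls_iff]
  exact and_congr_right fun _ => ⟨fun h2 => h.symm.trans h2, fun h2 => h.trans h2⟩

lemma cls_eq_iff {s : Finset V} {a b : V} (ha : a ∈ s) :
    cls G s a = cls G s b ↔ WIn G s a b := by
  constructor
  · intro h
    have : a ∈ cls G s b := h ▸ mem_cls_self ha
    exact (mem_cls_iff.mp this).2.symm
  · exact cls_eq_of_win

/-- The components of the graph induced on `s`, as a finset of finsets. -/
noncomputable def comps (G : SimpleGraph V) (s : Finset V) : Finset (Finset V) :=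
  s.image (cls G s)

/-- If a walk in `s` from `a` reaches `v`, then `a` is joined inside `s.erase v` to a
neighbor of `v`. -/
lemma reach_erase {s : Finset V} {v a : V} (hav : a ≠ v) (h : WIn G s a v) :
    ∃ x, G.Adj v x ∧ WIn G (s.erase v) a x := by
  obtain ⟨w, hw⟩ := h
  induction w with
  | nil => exact absurd rfl hav
  | @cons a a' v hadj q ih =>
    have ha : a ∈ s := hw a (by simp)
    have hqs : ∀ x ∈ q.support, x ∈ s := fun x hx => hw x (by simp [hx])
    by_cases ha' : a' = v
    · subst ha'
      exact ⟨a, hadj.symm, WIn.refl (mem_erase.mpr ⟨hav, ha⟩)⟩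
    · obtain ⟨x, hx1, hx2⟩ := ih ha' hqs
      refine ⟨x, hx1, (WIn.of_adj (mem_erase.mpr ⟨hav, ha⟩)
        (mem_erase.mpr ⟨ha', hqs a' q.start_mem_support⟩) hadj).trans hx2⟩

/-- If `a` cannot reach `v` within `s`, its reachability in `s` and `s.erase v` agree. -/
lemma win_erase_of_not_reach {s : Finset V} {v a b : V} (hav : ¬ WIn G s a v) :
    WIn G s a b ↔ WIn G (s.erase v) a b := by
  constructor
  · rintro ⟨w, hw⟩
    refine ⟨w, fun x hx => mem_erase.mpr ⟨?_, hw x hx⟩⟩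
    rintro rfl
    exact hav ⟨w.takeUntil _ hx, fun y hy => hw y (w.support_takeUntil_subset hx hy)⟩
  · exact fun h => h.mono (erase_subset _ _)

lemma cls_erase_of_not_reach {s : Finset V} {v a : V} (hav : ¬ WIn G s a v) :
    cls G s a = cls G (s.erase v) a := by
  ext x
  simp only [mem_cls_iff]
  constructor
  · rintro ⟨hx, hwx⟩
    have hxv : x ≠ v := by rintro rfl; exact hav hwx
    exact ⟨mem_erase.mpr ⟨hxv, hx⟩, (win_erase_of_not_reach hav).mp hwx⟩
  · rintro ⟨hx, hwx⟩
    exact ⟨(erase_subset _ _) hx, hwx.mono (erase_subset _ _)⟩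

/-- Counting components when removing a vertex. -/
lemma comps_erase {s : Finset V} {v : V} (hv : v ∈ s) :
    comps G s = insert (cls G s v)
      (((comps G (s.erase v))).filter fun C => ¬ ∃ x ∈ C, G.Adj v x) := by
  ext C
  simp only [comps, mem_image, mem_insert, mem_filter]
  constructor
  · rintro ⟨a, ha, rfl⟩
    by_cases hww : WIn G s v a
    · exact Or.inl (cls_eq_of_win hww).symm
    · have hav : ¬ WIn G s a v := fun h => hww h.symm
      have hanv : a ≠ v := by rintro rfl; exact hww (WIn.refl hv)
      refine Or.inr ⟨⟨a, mem_erase.mpr ⟨hanv, ha⟩, (cls_erase_of_not_reach hav).symm⟩, ?_⟩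
      rintro ⟨x, hxC, hadj⟩
      obtain ⟨hx, hwx⟩ := mem_cls_iff.mp hxC
      exact hav (hwx.trans (WIn.of_adj hx hv hadj.symm))
  · rintro (rfl | ⟨⟨a, ha, rfl⟩, hfil⟩)
    · exact ⟨v, hv, rfl⟩
    · obtain ⟨hanv, has⟩ := mem_erase.mp ha
      have hav : ¬ WIn G s a v := by
        intro h
        obtain ⟨x, hx1, hx2⟩ := reach_erase hanv h
        exact hfil ⟨x, mem_cls_iff.mpr ⟨hx2.right_mem, hx2⟩, hx1⟩
      exact ⟨a, has, cls_erase_of_not_reach hav⟩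

lemma cls_v_not_mem {s : Finset V} {v : V} (hv : v ∈ s) :
    cls G s v ∉ ((comps G (s.erase v))).filter fun C => ¬ ∃ x ∈ C, G.Adj v x := by
  intro h
  obtain ⟨a, ha, heq⟩ := mem_image.mp (mem_filter.mp h).1
  have : v ∈ cls G (s.erase v) a := heq.symm ▸ mem_cls_self hv
  exact (mem_erase.mp (mem_cls_iff.mp this).1).1 rfl

lemma card_comps_erase {s : Finset V} {v : V} (hv : v ∈ s) :
    (comps G s).card =
      1 + (((comps G (s.erase v))).filter fun C => ¬ ∃ x ∈ C, G.Adj v x).card := by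
  rw [comps_erase hv, card_insert_of_notMem (cls_v_not_mem hv), add_comm]

lemma comps_filter_adj {s : Finset V} {v : V} :
    ((comps G s).filter fun C => ∃ x ∈ C, G.Adj v x) = (s.filter (G.Adj v)).image (cls G s) := by
  ext C
  simp only [comps, mem_filter, mem_image]
  constructor
  · rintro ⟨⟨a, ha, rfl⟩, x, hxC, hadj⟩
    obtain ⟨hx, hwx⟩ := mem_cls_iff.mp hxC
    exact ⟨x, ⟨hx, hadj⟩, (cls_eq_of_win hwx).symm⟩
  · rintro ⟨x, ⟨hxs, hadj⟩, rfl⟩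
    exact ⟨⟨x, hxs, rfl⟩, x, mem_cls_self hxs, hadj⟩

lemma card_image_eq_of_iff {α β γ : Type*} [DecidableEq β] [DecidableEq γ] (t : Finset α) (f : α → β) (g : α → γ)
    (h : ∀ a ∈ t, ∀ b ∈ t, (f a = f b ↔ g a = g b)) :
    (t.image f).card = (t.image g).card := by
  induction t using Finset.induction_on with
  | empty => simp
  | @insert a t hat ih =>
    rw [image_insert, image_insert]
    have hmem : f a ∈ t.image f ↔ g a ∈ t.image g := by
      simp only [mem_image]
      constructor
      · rintro ⟨b, hb, hfb⟩
        exact ⟨b, hb, (h b (mem_insert_of_mem hb) a (mem_insert_self _ _)).mp hfb⟩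
      · rintro ⟨b, hb, hgb⟩
        exact ⟨b, hb, (h b (mem_insert_of_mem hb) a (mem_insert_self _ _)).mpr hgb⟩
    by_cases hf : f a ∈ t.image f
    · rw [card_insert_of_mem hf, card_insert_of_mem (hmem.mp hf)]
      exact ih fun a ha b hb => h a (mem_insert_of_mem ha) b (mem_insert_of_mem hb)
    · rw [card_insert_of_notMem hf, card_insert_of_notMem (fun hg => hf (hmem.mpr hg))]
      rw [ih fun a ha b hb => h a (mem_insert_of_mem ha) b (mem_insert_of_mem hb)]

lemma card_comps_neighbors (hG : G.IsChordal) {s : Finset V} {v : V} (hv : v ∉ s) :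
    ((comps G s).filter fun C => ∃ x ∈ C, G.Adj v x).card =
      (comps G (s.filter (G.Adj v))).card := by
  rw [comps_filter_adj, comps]
  apply card_image_eq_of_iff
  intro a ha b hb
  obtain ⟨has, hva⟩ := mem_filter.mp ha
  obtain ⟨hbs, hvb⟩ := mem_filter.mp hb
  rw [cls_eq_iff has, cls_eq_iff ha]
  constructor
  · rintro ⟨w, hw⟩
    exact key hG hv w.length a b hva hvb ⟨w, hw, rfl⟩
  · exact fun h => h.mono (filter_subset _ _)

/-- The component-counting recursion for chordal graphs. -/
lemma comps_card_recursion (hG : G.IsChordal) {s : Finset V} {v : V} (hv : v ∈ s) :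
    (comps G s).card + (comps G ((s.erase v).filter (G.Adj v))).card =
      (comps G (s.erase v)).card + 1 := by
  have h1 := card_comps_erase (G := G) hv
  have h2 := card_filter_add_card_filter_not (s := comps G (s.erase v))
    (p := fun C => ∃ x ∈ C, G.Adj v x)
  have h3 := card_comps_neighbors hG (s := s.erase v) (v := v) (notMem_erase v s)
  omega

end ChordalAux

namespace ChordalAux

variable {V : Type*} {G : SimpleGraph V}

/-- Truncated alternating sum over cliques contained in `s` (including the empty clique). -/
noncomputable def Esum (G : SimpleGraph V) (s : Finset V) (t : ℕ) : ℝ :=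
  ∑ K ∈ s.powerset.filter (fun K : Finset V => G.IsClique (K : Set V) ∧ t ≤ K.card), (-1 : ℝ) ^ K.card

lemma Esum_empty (t : ℕ) : Esum G ∅ t = if t = 0 then 1 else 0 := by
  rw [Esum, powerset_empty, filter_singleton]
  by_cases ht : t = 0
  · subst ht
    rw [if_pos (by simp [SimpleGraph.isClique_empty])]
    simp
  · rw [if_neg (by simp [Nat.le_zero, ht]), if_neg ht]
    simp

lemma Esum_zero (s : Finset V) : Esum G s 0 = 1 + Esum G s 1 := by
  have h : s.powerset.filter (fun K : Finset V => G.IsClique (K : Set V) ∧ 0 ≤ K.card) =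
      insert ∅ (s.powerset.filter (fun K : Finset V => G.IsClique (K : Set V) ∧ 1 ≤ K.card)) := by
    ext K
    simp only [mem_filter, mem_insert, mem_powerset]
    constructor
    · rintro ⟨hK, hcl, -⟩
      rcases Nat.eq_zero_or_pos K.card with h0 | h1
      · exact Or.inl (card_eq_zero.mp h0)
      · exact Or.inr ⟨hK, hcl, h1⟩
    · rintro (rfl | ⟨hK, hcl, h1⟩)
      · exact ⟨empty_subset _, by simp [SimpleGraph.isClique_empty], Nat.zero_le _⟩
      · exact ⟨hK, hcl, Nat.zero_le _⟩
  rw [Esum, h, sum_insert (by simp)]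
  simp [Esum]

/-- The deletion recursion for `Esum`. -/
lemma Esum_erase {s : Finset V} {v : V} (hv : v ∈ s) (t : ℕ) :
    Esum G s t = Esum G (s.erase v) t - Esum G ((s.erase v).filter (G.Adj v)) (t - 1) := by
  rw [Esum, ← Finset.sum_filter_add_sum_filter_not _ (fun K => v ∈ K)]
  have h1 : (s.powerset.filter (fun K : Finset V => G.IsClique (K : Set V) ∧ t ≤ K.card)).filter
      (fun K => ¬ v ∈ K) =
      (s.erase v).powerset.filter (fun K : Finset V => G.IsClique (K : Set V) ∧ t ≤ K.card) := by
    ext K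
    simp only [mem_filter, mem_powerset, subset_erase]
    tauto
  have h2 : ∑ K ∈ (s.powerset.filter (fun K : Finset V => G.IsClique (K : Set V) ∧ t ≤ K.card)).filter
      (fun K => v ∈ K), (-1 : ℝ) ^ K.card =
      - Esum G ((s.erase v).filter (G.Adj v)) (t - 1) := by
    rw [Esum, ← Finset.sum_neg_distrib]
    refine Finset.sum_nbij' (fun K => K.erase v) (fun K => insert v K) ?_ ?_ ?_ ?_ ?_
    · intro K hK
      simp only [mem_filter, mem_powerset] at hK ⊢
      obtain ⟨⟨hKs, hcl, hcard⟩, hvK⟩ := hK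
      have herase : K.erase v ⊆ (s.erase v).filter (G.Adj v) := by
        intro x hx
        obtain ⟨hxv, hxK⟩ := mem_erase.mp hx
        exact mem_filter.mpr ⟨mem_erase.mpr ⟨hxv, hKs hxK⟩,
          hcl (by simpa using hvK) (by simpa using hxK) (Ne.symm hxv)⟩
      refine ⟨herase, hcl.subset (by simpa using erase_subset v K), ?_⟩
      have := card_erase_add_one hvK
      omega
    · intro K hK
      simp only [mem_filter, mem_powerset] at hK ⊢
      obtain ⟨hKs, hcl, hcard⟩ := hK
      have hvK : v ∉ K := fun h => (mem_erase.mp ((mem_filter.mp (hKs h)).1)).1 rfl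
      have hadj : ∀ x ∈ K, G.Adj v x := fun x hx => (mem_filter.mp (hKs hx)).2
      refine ⟨⟨?_, ?_, ?_⟩, mem_insert_self _ _⟩
      · intro x hx
        rcases mem_insert.mp hx with rfl | hx
        · exact hv
        · exact (erase_subset _ _) (mem_filter.mp (hKs hx)).1
      · rw [coe_insert]
        exact hcl.insert fun x hx hne => hadj x (by simpa using hx)
      · rw [card_insert_of_notMem hvK]
        omega
    · intro K hK
      exact insert_erase (mem_filter.mp hK).2
    · intro K hK
      simp only [mem_filter, mem_powerset] at hK
      have hvK : v ∉ K := fun h => (mem_erase.mp ((mem_filter.mp (hK.1 h)).1)).1 rfl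
      exact erase_insert hvK
    · intro K hK
      have hvK : v ∈ K := (mem_filter.mp hK).2
      have hc := card_erase_add_one hvK
      have : K.card = (K.erase v).card + 1 := hc.symm
      rw [this, pow_succ]
      ring
  rw [h1, h2]
  simp only [Esum]
  ring

end ChordalAux

namespace ChordalAux

variable {V : Type*} {G : SimpleGraph V}

lemma comps_empty : comps G (∅ : Finset V) = ∅ := by simp [comps]

lemma Esum_one_eq (hG : G.IsChordal) :
    ∀ n : ℕ, ∀ s : Finset V, s.card = n → Esum G s 1 = -((comps G s).card : ℝ) := by
  intro n
  induction n using Nat.strong_induction_on with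
  | _ n IH =>
  intro s hcard
  rcases s.eq_empty_or_nonempty with rfl | ⟨v, hv⟩
  · simp [Esum_empty, comps_empty]
  · have hlt : (s.erase v).card < n := by
      rw [← hcard]
      exact card_erase_lt_of_mem hv
    have hNv : ((s.erase v).filter (G.Adj v)).card < n := by
      calc ((s.erase v).filter (G.Adj v)).card ≤ (s.erase v).card := card_filter_le _ _
        _ < n := hlt
    have h1 := Esum_erase (G := G) hv 1
    have h2 := Esum_zero (G := G) ((s.erase v).filter (G.Adj v))
    have h3 := IH _ hlt (s.erase v) rfl
    have h4 := IH _ hNv ((s.erase v).filter (G.Adj v)) rfl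
    have h5 := comps_card_recursion hG hv
    have h5' : ((comps G s).card : ℝ) + ((comps G ((s.erase v).filter (G.Adj v))).card : ℝ)
        = ((comps G (s.erase v)).card : ℝ) + 1 := by exact_mod_cast h5
    rw [h1, h2, h3, h4] at *
    simp only [Nat.sub_self] at *
    linarith

/-- Main sign lemma: for chordal `G`, odd truncated sums are `≤ 0`,
even ones (from level 2 on) are `≥ 0`. -/
lemma Esum_sign (hG : G.IsChordal) :
    ∀ n : ℕ, ∀ s : Finset V, s.card = n → ∀ t : ℕ,
      (Odd t → Esum G s t ≤ 0) ∧ (Even t → 2 ≤ t → 0 ≤ Esum G s t) := by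
  intro n
  induction n using Nat.strong_induction_on with
  | _ n IH =>
  intro s hcard t
  rcases s.eq_empty_or_nonempty with rfl | ⟨v, hv⟩
  · constructor
    · intro ht
      rw [Esum_empty]
      have : t ≠ 0 := by rintro rfl; simp at ht
      simp [this]
    · intro _ ht
      rw [Esum_empty]
      have : t ≠ 0 := by omega
      simp [this]
  · have hlt : (s.erase v).card < n := by
      rw [← hcard]; exact card_erase_lt_of_mem hv
    have hNv : ((s.erase v).filter (G.Adj v)).card < n :=
      lt_of_le_of_lt (card_filter_le _ _) hlt
    have hrec := Esum_erase (G := G) hv t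
    constructor
    · intro ht
      rcases eq_or_lt_of_le (show 1 ≤ t from ht.pos) with h1 | h3
      · -- t = 1
        rw [← h1]
        rw [Esum_one_eq hG s.card s rfl]
        simp
      · -- t ≥ 2 odd, so t ≥ 3
        have ht' := Nat.odd_iff.mp ht
        have hodd : Odd (t - 1 + 1) := by
          have : t - 1 + 1 = t := by omega
          rw [this]; exact ht
        have heven : Even (t - 1) := by
          rcases Nat.even_or_odd (t-1) with h | h
          · exact h
          · exfalso
            have : Even t := by
              have ht1 : t = (t-1) + 1 := by omega
              rw [ht1]
              exact h.add_one
            exact (Nat.not_even_iff_odd.mpr ht) this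
        have hA := (IH _ hlt (s.erase v) rfl t).1 ht
        have hB := (IH _ hNv ((s.erase v).filter (G.Adj v)) rfl (t-1)).2 heven (by omega)
        rw [hrec]
        linarith
    · intro hte ht2
      have hodd : Odd (t - 1) := by
        rcases Nat.even_or_odd (t-1) with h | h
        · exfalso
          have : Odd t := by
            have ht1 : t = (t-1) + 1 := by omega
            rw [ht1]
            exact h.add_one
          exact (Nat.not_odd_iff_even.mpr hte) this
        · exact h
      have hA := (IH _ hlt (s.erase v) rfl t).2 hte ht2
      have hB := (IH _ hNv ((s.erase v).filter (G.Adj v)) rfl (t-1)).1 hodd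
      rw [hrec]
      linarith

lemma Esum_odd_nonpos (hG : G.IsChordal) (s : Finset V) {t : ℕ} (ht : Odd t) :
    Esum G s t ≤ 0 :=
  (Esum_sign hG s.card s rfl t).1 ht

end ChordalAux

namespace ChordalAux

open MeasureTheory

variable {Ω V : Type*} [MeasurableSpace Ω] [Fintype V]

/-- The atom of the Venn diagram of the events `A v` indexed by `S`. -/
def atom (A : V → Set Ω) (S : Finset V) : Set Ω := {ω | ∀ v : V, v ∈ S ↔ ω ∈ A v}

lemma measurableSet_atom (A : V → Set Ω) (hA : ∀ v, MeasurableSet (A v)) (S : Finset V) :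
    MeasurableSet (atom A S) := by
  have h : atom A S = ⋂ v : V, (if v ∈ S then A v else (A v)ᶜ) := by
    ext ω
    simp only [atom, Set.mem_iInter, Set.mem_setOf_eq]
    constructor
    · intro h v
      by_cases hv : v ∈ S
      · simp only [hv, if_true]
        exact (h v).mp hv
      · simp only [hv, if_false]
        exact fun hAv => hv ((h v).mpr hAv)
    · intro h v
      have := h v
      by_cases hv : v ∈ S
      · simp only [hv, if_true] at this
        exact ⟨fun _ => this, fun _ => hv⟩
      · simp only [hv, if_false] at this
        exact ⟨fun h' => absurd h' hv, fun h' => absurd h' this⟩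
  rw [h]
  exact MeasurableSet.iInter fun v => by
    by_cases hv : v ∈ S <;> simp [hv, hA v, (hA v).compl]

lemma atom_pairwise_disjoint (A : V → Set Ω) {S T : Finset V} (hST : S ≠ T) :
    Disjoint (atom A S) (atom A T) := by
  rw [Set.disjoint_left]
  intro ω hS hT
  apply hST
  ext v
  rw [hS v, ← hT v]

lemma iInter_eq_biUnion_atom (A : V → Set Ω) (I : Finset V) :
    ⋂ i ∈ I, A i = ⋃ S ∈ Finset.univ.powerset.filter (fun S : Finset V => I ⊆ S), atom A S := by
  ext ω
  simp only [Set.mem_iInter, Set.mem_iUnion, Finset.mem_filter, Finset.mem_powerset,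
    exists_prop]
  constructor
  · intro h
    refine ⟨Finset.univ.filter (fun v => ω ∈ A v), ⟨Finset.filter_subset _ _, ?_⟩, ?_⟩
    · intro i hi
      exact Finset.mem_filter.mpr ⟨Finset.mem_univ _, h i hi⟩
    · intro v
      simp only [Finset.mem_filter, Finset.mem_univ, true_and]
  · rintro ⟨S, ⟨-, hIS⟩, hω⟩
    intro i hi
    exact (hω i).mp (hIS hi)

lemma measure_iInter_toReal (μ : Measure Ω) [IsFiniteMeasure μ] (A : V → Set Ω)
    (hA : ∀ v, MeasurableSet (A v)) (I : Finset V) :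
    (μ (⋂ i ∈ I, A i)).toReal =
      ∑ S ∈ Finset.univ.powerset,
        (if I ⊆ S then (μ (atom A S)).toReal else 0) := by
  rw [iInter_eq_biUnion_atom A I, measure_biUnion_finset ?_ (fun S _ => measurableSet_atom A hA S)]
  · rw [ENNReal.toReal_sum (fun S _ => measure_ne_top μ _)]
    rw [Finset.sum_filter]
  · intro S hS T hT hST
    exact atom_pairwise_disjoint A hST

end ChordalAux


theorem full_sum_ge_truncated_sum {Ω V : Type*} [MeasurableSpace Ω] [Fintype V] [Nonempty V]
    (μ : Measure Ω) [IsProbabilityMeasure μ] (G : SimpleGraph V) (hG : G.IsChordal)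
    (A : V → Set Ω) (hA : ∀ v, MeasurableSet (A v)) (r : ℕ) (hr : 0 < r) :
    ∑ I ∈ G.cliqueComplex, (-1 : ℝ) ^ (I.card - 1) * (μ (⋂ i ∈ I, A i)).toReal ≥
      ∑ I ∈ G.cliqueComplex.filter (fun I => I.card ≤ 2 * r),
        (-1 : ℝ) ^ (I.card - 1) * (μ (⋂ i ∈ I, A i)).toReal := by
  classical
  have hsplit := Finset.sum_filter_add_sum_filter_not G.cliqueComplex
    (fun I => I.card ≤ 2 * r) (fun I => (-1 : ℝ) ^ (I.card - 1) * (μ (⋂ i ∈ I, A i)).toReal)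
  rw [ge_iff_le, ← hsplit, le_add_iff_nonneg_right]
  -- rewrite each measure via the atoms
  have hrw : ∀ I : Finset V, (-1 : ℝ) ^ (I.card - 1) * (μ (⋂ i ∈ I, A i)).toReal =
      ∑ S ∈ Finset.univ.powerset,
        (if I ⊆ S then (-1 : ℝ) ^ (I.card - 1) * (μ (ChordalAux.atom A S)).toReal else 0) := by
    intro I
    rw [ChordalAux.measure_iInter_toReal μ A hA I, Finset.mul_sum]
    exact Finset.sum_congr rfl fun S _ => by
      by_cases h : I ⊆ S <;> simp [h]
  rw [Finset.sum_congr rfl fun I _ => hrw I, Finset.sum_comm]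
  apply Finset.sum_nonneg
  intro S hS
  -- inner sum over big cliques contained in S
  have hinner : ∑ I ∈ G.cliqueComplex.filter (fun I => ¬ I.card ≤ 2 * r),
      (if I ⊆ S then (-1 : ℝ) ^ (I.card - 1) * (μ (ChordalAux.atom A S)).toReal else 0) =
      (- ChordalAux.Esum G S (2 * r + 1)) * (μ (ChordalAux.atom A S)).toReal := by
    rw [← Finset.sum_filter]
    have hset : (G.cliqueComplex.filter (fun I => ¬ I.card ≤ 2 * r)).filter (fun I => I ⊆ S) =
        S.powerset.filter (fun K : Finset V => G.IsClique (K : Set V) ∧ 2 * r + 1 ≤ K.card) := by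
      ext K
      simp only [Finset.mem_filter, Finset.mem_powerset, SimpleGraph.cliqueComplex]
      constructor
      · rintro ⟨⟨⟨-, -, hcl⟩, hcard⟩, hKS⟩
        exact ⟨hKS, hcl, by omega⟩
      · rintro ⟨hKS, hcl, hcard⟩
        exact ⟨⟨⟨Finset.subset_univ _, Finset.card_pos.mp (by omega), hcl⟩, by omega⟩, hKS⟩
    rw [hset, ChordalAux.Esum, neg_mul, Finset.sum_mul, ← Finset.sum_neg_distrib]
    refine Finset.sum_congr rfl fun K hK => ?_
    obtain ⟨-, -, hcard⟩ := Finset.mem_filter.mp hK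
    have h1 : K.card = (K.card - 1) + 1 := by omega
    have h2 : (-1 : ℝ) ^ (K.card) = -(-1) ^ (K.card - 1) := by
      conv_lhs => rw [h1]
      rw [pow_succ]
      ring
    rw [h2]
    ring
  rw [hinner]
  apply mul_nonneg
  · rw [neg_nonneg]
    exact ChordalAux.Esum_odd_nonpos hG S ⟨r, by ring⟩
  · exact ENNReal.toReal_nonneg
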